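/- Let H be a normal subgroup of a group G, where G is generated by a finite set S. Then K(G;S) ≥ (1/2)·K(G,H;S)·K(G; S ∪ H), where K(G,H;S) is the relative Kazhdan constant of the pair (G,H) with respect to S. -/
import Mathlib


open scoped Pointwise

/-- The (relative) Kazhdan constant `K(G, H; S)`: the supremum of all `ε ≥ 0` such that for
every unitary representation of `G` without nonzero `H`-invariant vectors, every nonzero
vector is moved by at least `ε` (relative to its norm) by some element of `S`. -/
noncomputable def kazhdanConst (G : Type) [Group G] (H S : Set G) : ℝ :=
  sSup {ε : ℝ | 0 ≤ ε ∧
    ∀ (V : Type) [NormedAddCommGroup V] [InnerProductSpace ℂ V] [CompleteSpace V]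
      (ρ : G →* (V ≃ₗᵢ[ℂ] V)),
      (∀ v : V, (∀ h ∈ H, ρ h v = v) → v = 0) →
      ∀ v : V, v ≠ 0 → ∃ s ∈ S, ε * ‖v‖ ≤ ‖ρ s v - v‖}

variable {G : Type} [Group G] {V : Type} [NormedAddCommGroup V] [InnerProductSpace ℂ V]

private lemma rep_apply_apply (ρ : G →* (V ≃ₗᵢ[ℂ] V)) (a b : G) (x : V) :
    ρ a (ρ b x) = ρ (a * b) x := by
  rw [map_mul]; rfl

/-- Restriction of a unitary representation to an invariant closed subspace. -/
noncomputable def subRep (ρ : G →* (V ≃ₗᵢ[ℂ] V)) (K : Submodule ℂ V)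
    (hK : ∀ g : G, ∀ w ∈ K, ρ g w ∈ K) : G →* (K ≃ₗᵢ[ℂ] K) where
  toFun g :=
    { toLinearEquiv :=
        { toFun := fun w => ⟨ρ g w, hK g w w.2⟩
          map_add' := fun x y => by ext; simp
          map_smul' := fun c x => by ext; simp
          invFun := fun w => ⟨ρ g⁻¹ w, hK g⁻¹ w w.2⟩
          left_inv := fun w => by
            ext; simp [rep_apply_apply]
          right_inv := fun w => by
            ext; simp [rep_apply_apply] }
      norm_map' := fun w => (ρ g).norm_map w }
  map_one' := by
    ext w
    show (ρ 1 (w : V)) = w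
    simp
  map_mul' := fun g h => by
    ext w
    show (ρ (g * h) (w : V)) = ρ g (ρ h (w : V))
    rw [rep_apply_apply]

@[simp] lemma subRep_apply (ρ : G →* (V ≃ₗᵢ[ℂ] V)) (K : Submodule ℂ V)
    (hK : ∀ g : G, ∀ w ∈ K, ρ g w ∈ K) (g : G) (w : K) :
    (subRep ρ K hK g w : V) = ρ g w := rfl

/-- The defining set of the Kazhdan constant. -/
def KSet (G : Type) [Group G] (H S : Set G) : Set ℝ :=
  {ε : ℝ | 0 ≤ ε ∧
    ∀ (V : Type) [NormedAddCommGroup V] [InnerProductSpace ℂ V] [CompleteSpace V]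
      (ρ : G →* (V ≃ₗᵢ[ℂ] V)),
      (∀ v : V, (∀ h ∈ H, ρ h v = v) → v = 0) →
      ∀ v : V, v ≠ 0 → ∃ s ∈ S, ε * ‖v‖ ≤ ‖ρ s v - v‖}

lemma kazhdanConst_nonneg (G : Type) [Group G] (H S : Set G) :
    0 ≤ kazhdanConst G H S :=
  Real.sSup_nonneg fun _ h => h.1

/-- If some element of the defining set exceeds 2, every representation in the class is trivial. -/
lemma trivial_of_gt_two {G : Type} [Group G] {H S : Set G} {ε : ℝ}
    (hε : ε ∈ KSet G H S) (h2 : 2 < ε)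
    (V : Type) [NormedAddCommGroup V] [InnerProductSpace ℂ V] [CompleteSpace V]
    (ρ : G →* (V ≃ₗᵢ[ℂ] V)) (hinv : ∀ v : V, (∀ h ∈ H, ρ h v = v) → v = 0)
    (v : V) : v = 0 := by
  by_contra hv
  obtain ⟨s, _, hle⟩ := hε.2 V ρ hinv v hv
  have hb : ‖ρ s v - v‖ ≤ 2 * ‖v‖ := by
    calc ‖ρ s v - v‖ ≤ ‖ρ s v‖ + ‖v‖ := norm_sub_le _ _
    _ = 2 * ‖v‖ := by rw [(ρ s).norm_map]; ring
  have hv' : 0 < ‖v‖ := norm_pos_iff.2 hv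
  nlinarith

/-- If the class of representations is trivial, every nonnegative real is in the defining set. -/
lemma mem_KSet_of_trivial {G : Type} [Group G] {H S : Set G} {ε : ℝ} (hε : 0 ≤ ε)
    (htriv : ∀ (V : Type) [NormedAddCommGroup V] [InnerProductSpace ℂ V] [CompleteSpace V]
      (ρ : G →* (V ≃ₗᵢ[ℂ] V)),
      (∀ v : V, (∀ h ∈ H, ρ h v = v) → v = 0) → ∀ v : V, v = 0) :
    ε ∈ KSet G H S :=
  ⟨hε, fun V _ _ _ ρ hinv v hv => absurd (htriv V ρ hinv v) hv⟩

lemma sSup_KSet_eq_zero_of_trivial {G : Type} [Group G] {H S : Set G}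
    (htriv : ∀ (V : Type) [NormedAddCommGroup V] [InnerProductSpace ℂ V] [CompleteSpace V]
      (ρ : G →* (V ≃ₗᵢ[ℂ] V)),
      (∀ v : V, (∀ h ∈ H, ρ h v = v) → v = 0) → ∀ v : V, v = 0) :
    sSup (KSet G H S) = 0 := by
  apply Real.sSup_of_not_bddAbove
  rintro ⟨x, hx⟩
  have h1 : max x 0 + 1 ∈ KSet G H S := mem_KSet_of_trivial (by positivity) htriv
  have := hx h1
  have : x ≤ max x 0 := le_max_left _ _
  linarith [hx h1, le_max_left x 0]

open scoped InnerProductSpace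


/-- The subspace of `H`-fixed vectors. -/
def fixedSubmodule (ρ : G →* (V ≃ₗᵢ[ℂ] V)) (H : Subgroup G) : Submodule ℂ V where
  carrier := {w : V | ∀ h ∈ H, ρ h w = w}
  add_mem' := fun hx hy h hh => by rw [map_add, hx h hh, hy h hh]
  zero_mem' := fun h _ => map_zero _
  smul_mem' := fun c x hx h hh => by
    rw [LinearIsometryEquiv.map_smul, hx h hh]

lemma mem_fixedSubmodule {ρ : G →* (V ≃ₗᵢ[ℂ] V)} {H : Subgroup G} {w : V} :
    w ∈ fixedSubmodule ρ H ↔ ∀ h ∈ H, ρ h w = w := Iff.rfl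

lemma fixedSubmodule_isClosed (ρ : G →* (V ≃ₗᵢ[ℂ] V)) (H : Subgroup G) :
    IsClosed (fixedSubmodule ρ H : Set V) := by
  have : (fixedSubmodule ρ H : Set V) = ⋂ (h : G) (_ : h ∈ H), {w : V | ρ h w = w} := by
    ext w; simp only [SetLike.mem_coe, mem_fixedSubmodule, Set.mem_iInter, Set.mem_setOf_eq]
  rw [this]
  exact isClosed_iInter fun h => isClosed_iInter fun _ =>
    isClosed_eq (ρ h).continuous continuous_id

lemma fixedSubmodule_invariant {ρ : G →* (V ≃ₗᵢ[ℂ] V)} {H : Subgroup G} (hN : H.Normal)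
    (g : G) {w : V} (hw : w ∈ fixedSubmodule ρ H) : ρ g w ∈ fixedSubmodule ρ H := by
  intro h hh
  have h' : g⁻¹ * h * g ∈ H := by
    have := hN.conj_mem h hh g⁻¹
    simpa [mul_assoc] using this
  rw [rep_apply_apply, show h * g = g * (g⁻¹ * h * g) by group, ← rep_apply_apply,
    hw _ h']

lemma fixedSubmodule_orth_invariant {ρ : G →* (V ≃ₗᵢ[ℂ] V)} {H : Subgroup G} (hN : H.Normal)
    (g : G) {w : V} (hw : w ∈ (fixedSubmodule ρ H)ᗮ) : ρ g w ∈ (fixedSubmodule ρ H)ᗮ := by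
  rw [Submodule.mem_orthogonal] at hw ⊢
  intro u hu
  have h1 : ρ g⁻¹ u ∈ fixedSubmodule ρ H := fixedSubmodule_invariant hN g⁻¹ hu
  calc ⟪u, ρ g w⟫_ℂ = ⟪ρ g (ρ g⁻¹ u), ρ g w⟫_ℂ := by
        rw [rep_apply_apply, mul_inv_cancel, map_one]; rfl
    _ = ⟪ρ g⁻¹ u, w⟫_ℂ := (ρ g).inner_map_map _ _
    _ = 0 := hw _ h1

lemma norm_component_le (W : Submodule ℂ V) {x y : V} (hx : x ∈ W) (hy : y ∈ Wᗮ) :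
    ‖y‖ ≤ ‖x + y‖ := by
  have h0 : ⟪x, y⟫_ℂ = 0 := Submodule.inner_right_of_mem_orthogonal hx hy
  have hsq : ‖x + y‖ ^ 2 = ‖x‖ ^ 2 + ‖y‖ ^ 2 := by
    rw [@norm_add_sq ℂ, h0]
    simp
  nlinarith [norm_nonneg (x + y), norm_nonneg x, norm_nonneg y]
section Key

variable {G : Type} [Group G]

lemma key_membership (S : Set G) (hSfin : S.Finite) (hSgen : Subgroup.closure S = ⊤)
    (H : Subgroup G) (hN : H.Normal)
    (hAne : (KSet G (H : Set G) S).Nonempty)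
    (hA2 : sSup (KSet G (H : Set G) S) ≤ 2)
    {b : ℝ} (hb : b ∈ KSet G Set.univ (S ∪ (H : Set G))) :
    (1 / 2 * (sSup (KSet G (H : Set G) S) * b)) ∈ KSet G Set.univ S := by
  set ε₁ := sSup (KSet G (H : Set G) S) with hε₁def
  have hε₁0 : 0 ≤ ε₁ := Real.sSup_nonneg fun _ h => h.1
  have hb0 : 0 ≤ b := hb.1
  refine ⟨by positivity, ?_⟩
  intro V _ _ _ ρ hinv v hv
  -- S is nonempty
  have hSne : S.Nonempty := by
    rcases S.eq_empty_or_nonempty with rfl | h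
    · exfalso
      rw [Subgroup.closure_empty] at hSgen
      have hg1 : ∀ g : G, g = 1 := fun g => by
        have : g ∈ (⊥ : Subgroup G) := by rw [hSgen]; trivial
        exact Subgroup.mem_bot.1 this
      exact hv (hinv v fun h _ => by rw [hg1 h, map_one]; rfl)
    · exact h
  -- the max displacement over S
  have hSFne : hSfin.toFinset.Nonempty := hSfin.toFinset_nonempty.2 hSne
  set M := hSfin.toFinset.sup' hSFne (fun s => ‖ρ s v - v‖) with hMdef
  have hMmax : ∀ s ∈ S, ‖ρ s v - v‖ ≤ M := fun s hs =>
    Finset.le_sup' (fun s => ‖ρ s v - v‖) (hSfin.mem_toFinset.2 hs)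
  obtain ⟨s₀, hs₀⟩ := hSne
  have hM0 : 0 ≤ M := le_trans (norm_nonneg _) (hMmax s₀ hs₀)
  suffices hgoal : 1 / 2 * (ε₁ * b) * ‖v‖ ≤ M by
    obtain ⟨s, hsSF, hMs⟩ := Finset.exists_mem_eq_sup' hSFne (fun s => ‖ρ s v - v‖)
    exact ⟨s, hSfin.mem_toFinset.1 hsSF, by rw [← hMs]; exact hgoal⟩
  obtain ⟨s, hsSH, hble⟩ := hb.2 V ρ hinv v hv
  rcases hsSH with hsS | hsH
  · -- the mover is in S
    have h1 := hMmax s hsS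
    nlinarith [norm_nonneg v]
  · -- the mover is in H
    by_cases hbz : b = 0
    · rw [hbz]; simpa using hM0
    have hbpos : 0 < b := lt_of_le_of_ne hb0 (Ne.symm hbz)
    -- decompose v
    set W := fixedSubmodule ρ H with hWdef
    haveI : CompleteSpace W := (fixedSubmodule_isClosed ρ H).completeSpace_coe
    obtain ⟨v₁, hv₁, v₂, hv₂, hvsum⟩ := W.exists_add_mem_mem_orthogonal v
    have hρv₁ : ρ s v₁ = v₁ := hv₁ s hsH
    -- the displacement of v by s only sees v₂
    have hmove : ρ s v - v = ρ s v₂ - v₂ := by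
      rw [hvsum, map_add, hρv₁]; abel
    have hv₂norm : b * ‖v‖ ≤ 2 * ‖v₂‖ := by
      calc b * ‖v‖ ≤ ‖ρ s v - v‖ := hble
        _ = ‖ρ s v₂ - v₂‖ := by rw [hmove]
        _ ≤ ‖ρ s v₂‖ + ‖v₂‖ := norm_sub_le _ _
        _ = 2 * ‖v₂‖ := by rw [(ρ s).norm_map]; ring
    have hvpos : 0 < ‖v‖ := norm_pos_iff.2 hv
    have hv₂pos : 0 < ‖v₂‖ := by nlinarith
    have hv₂ne : v₂ ≠ 0 := norm_pos_iff.1 hv₂pos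
    -- the subrepresentation on Wᗮ
    haveI : CompleteSpace (Wᗮ : Submodule ℂ V) := W.instOrthogonalCompleteSpace
    set ρ' := subRep ρ Wᗮ (fun g w hw => fixedSubmodule_orth_invariant hN g hw) with hρ'def
    have hnoH : ∀ w : Wᗮ, (∀ h ∈ (H : Set G), ρ' h w = w) → w = 0 := by
      intro w hwfix
      have h1 : (w : V) ∈ W := by
        intro h hh
        exact congrArg Subtype.val (hwfix h hh)
      have h2 : ⟪(w : V), (w : V)⟫_ℂ = 0 :=
        Submodule.inner_right_of_mem_orthogonal h1 w.2
      exact Subtype.ext (inner_self_eq_zero.1 h2)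
    -- every element of the relative Kazhdan set gives a bound
    have hall : ∀ a ∈ KSet G (H : Set G) S, a * ‖v₂‖ ≤ M := by
      intro a ha
      obtain ⟨t, htS, hta⟩ := ha.2 (Wᗮ : Submodule ℂ V) ρ' hnoH ⟨v₂, hv₂⟩
        (fun hc => hv₂ne (congrArg Subtype.val hc))
      have hnorm1 : ‖(⟨v₂, hv₂⟩ : Wᗮ)‖ = ‖v₂‖ := rfl
      have hnorm2 : ‖ρ' t ⟨v₂, hv₂⟩ - ⟨v₂, hv₂⟩‖ = ‖ρ t v₂ - v₂‖ := rfl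
      rw [hnorm1, hnorm2] at hta
      have hcomp : ‖ρ t v₂ - v₂‖ ≤ ‖ρ t v - v‖ := by
        have hx : ρ t v₁ - v₁ ∈ W := W.sub_mem (fixedSubmodule_invariant hN t hv₁) hv₁
        have hy : ρ t v₂ - v₂ ∈ Wᗮ := Wᗮ.sub_mem (fixedSubmodule_orth_invariant hN t hv₂) hv₂
        have hsum : ρ t v - v = (ρ t v₁ - v₁) + (ρ t v₂ - v₂) := by
          rw [hvsum, map_add]; abel
        rw [hsum]
        exact norm_component_le W hx hy
      exact hta.trans (hcomp.trans (hMmax t htS))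
    have hsup : ε₁ * ‖v₂‖ ≤ M := by
      rw [← le_div_iff₀ hv₂pos]
      exact csSup_le hAne fun a ha => (le_div_iff₀ hv₂pos).2 (hall a ha)
    nlinarith

end Key
/-- `movesBy G S ε` : in every unitary representation of `G` without nonzero invariant
vectors, every unit vector is moved by at least `ε` by some element of `S`. -/

theorem kazhdan_const_relative_bound
    (G : Type) [Group G] (S : Set G) (hSfin : S.Finite) (hSgen : Subgroup.closure S = ⊤)
    (H : Subgroup G) (hN : H.Normal) :
    (1 / 2 : ℝ) * (kazhdanConst G (H : Set G) S * kazhdanConst G Set.univ (S ∪ (H : Set G)))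
      ≤ kazhdanConst G Set.univ S := by
  classical
  show (1 / 2 : ℝ) * (sSup (KSet G (H : Set G) S) * sSup (KSet G Set.univ (S ∪ (H : Set G))))
      ≤ sSup (KSet G Set.univ S)
  set A := KSet G (H : Set G) S with hAdef
  set B := KSet G Set.univ (S ∪ (H : Set G)) with hBdef
  set C := KSet G Set.univ S with hCdef
  have hC0 : 0 ≤ sSup C := Real.sSup_nonneg fun _ h => h.1
  rcases A.eq_empty_or_nonempty with hAe | hAne
  · rw [hAe, Real.sSup_empty]; simpa using hC0
  by_cases hA2' : ∀ a ∈ A, a ≤ 2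
  case neg =>
    push_neg at hA2'
    obtain ⟨a, ha, ha2⟩ := hA2'
    have htriv : ∀ (V : Type) [NormedAddCommGroup V] [InnerProductSpace ℂ V] [CompleteSpace V]
        (ρ : G →* (V ≃ₗᵢ[ℂ] V)),
        (∀ v : V, (∀ h ∈ (H : Set G), ρ h v = v) → v = 0) → ∀ v : V, v = 0 :=
      fun V _ _ _ ρ hinv v => trivial_of_gt_two ha ha2 V ρ hinv v
    rw [show sSup A = 0 from sSup_KSet_eq_zero_of_trivial htriv]
    simpa using hC0
  case pos =>
  have hA2 : sSup A ≤ 2 := csSup_le hAne hA2'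
  by_cases hB2' : ∀ b ∈ B, b ≤ 2
  case neg =>
    push_neg at hB2'
    obtain ⟨b, hbB, hb2⟩ := hB2'
    have htriv : ∀ (V : Type) [NormedAddCommGroup V] [InnerProductSpace ℂ V] [CompleteSpace V]
        (ρ : G →* (V ≃ₗᵢ[ℂ] V)),
        (∀ v : V, (∀ h ∈ Set.univ, ρ h v = v) → v = 0) → ∀ v : V, v = 0 :=
      fun V _ _ _ ρ hinv v => trivial_of_gt_two hbB hb2 V ρ hinv v
    rw [show sSup B = 0 from sSup_KSet_eq_zero_of_trivial htriv]
    simpa using hC0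
  case pos =>
  have hCbdd : BddAbove C := by
    refine ⟨2, fun c hc => ?_⟩
    by_contra hc2
    push_neg at hc2
    have htriv : ∀ (V : Type) [NormedAddCommGroup V] [InnerProductSpace ℂ V] [CompleteSpace V]
        (ρ : G →* (V ≃ₗᵢ[ℂ] V)),
        (∀ v : V, (∀ h ∈ Set.univ, ρ h v = v) → v = 0) → ∀ v : V, v = 0 :=
      fun V _ _ _ ρ hinv v => trivial_of_gt_two hc hc2 V ρ hinv v
    have h3 : (3 : ℝ) ∈ B := mem_KSet_of_trivial (by norm_num) htriv
    linarith [hB2' 3 h3]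
  have hmem : ∀ b ∈ B, 1 / 2 * (sSup A * b) ≤ sSup C := fun b hbB =>
    le_csSup hCbdd (key_membership S hSfin hSgen H hN hAne hA2 hbB)
  rcases B.eq_empty_or_nonempty with hBe | hBne
  · rw [hBe, Real.sSup_empty]; simpa using hC0
  have hε₁0 : 0 ≤ sSup A := Real.sSup_nonneg fun _ h => h.1
  rcases eq_or_lt_of_le hε₁0 with heq | hpos
  · rw [← heq]; simpa using hC0
  have hε₂ : sSup B ≤ 2 * sSup C / sSup A := by
    refine csSup_le hBne fun b hbB => ?_
    rw [le_div_iff₀ hpos]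
    nlinarith [hmem b hbB]
  have hfin : sSup B * sSup A ≤ 2 * sSup C := (le_div_iff₀ hpos).1 hε₂
  linarith
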